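/- arXiv:1502.07584 — 6 statements merged into one kernel-verified Lean document; each statement's English description precedes it below -/
import Mathlib

section
/- Let f : U → V and g : V → W be linear maps of finite-dimensional real inner product spaces such that f is surjective and g is injective. Then det⊥(g ∘ f) = det⊥(f) · det⊥(g). -/
/-- `det⊥(f)`: for a linear map `f : V → W` of finite-dimensional real inner product
spaces, `detPerp f = 1` if `f = 0`, and otherwise it is the square root of the determinant
of the endomorphism of the orthogonal complement of `ker (f* ∘ f)` induced by `f* ∘ f`. -/
noncomputable def detPerp {V W : Type*} [NormedAddCommGroup V] [InnerProductSpace ℝ V]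
    [NormedAddCommGroup W] [InnerProductSpace ℝ W]
    [FiniteDimensional ℝ V] [FiniteDimensional ℝ W] (f : V →ₗ[ℝ] W) : ℝ :=
  letI := Classical.propDecidable (f = 0)
  if f = 0 then 1
  else Real.sqrt (LinearMap.det
    ((Submodule.orthogonalProjectionOnto (LinearMap.ker (LinearMap.adjoint f ∘ₗ f))ᗮ).toLinearMap
      ∘ₗ (LinearMap.adjoint f ∘ₗ f)
      ∘ₗ (LinearMap.ker (LinearMap.adjoint f ∘ₗ f))ᗮ.subtype))


open LinearMap RealInnerProductSpace

section helpers
variable {E F : Type*} [NormedAddCommGroup E] [InnerProductSpace ℝ E] [FiniteDimensional ℝ E]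
  [NormedAddCommGroup F] [InnerProductSpace ℝ F] [FiniteDimensional ℝ F]

lemma adjoint_subtype'' (K : Submodule ℝ E) :
    LinearMap.adjoint K.subtype = (Submodule.orthogonalProjectionOnto K).toLinearMap := by
  rw [LinearMap.adjoint_eq_toCLM_adjoint]
  have h : LinearMap.toContinuousLinearMap K.subtype = K.subtypeL := by
    ext x; rfl
  rw [h, Submodule.adjoint_subtypeL]

lemma ker_adjoint_comp_self' (f : E →ₗ[ℝ] F) :
    LinearMap.ker (LinearMap.adjoint f ∘ₗ f) = LinearMap.ker f := by
  ext x
  simp only [mem_ker, comp_apply]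
  refine ⟨fun h => ?_, fun h => by rw [h, map_zero]⟩
  have h2 : (inner ℝ (f x) (f x) : ℝ) = 0 := by
    rw [← LinearMap.adjoint_inner_left, h, inner_zero_left]
  rwa [inner_self_eq_zero] at h2

lemma det_proj_congr {K L : Submodule ℝ E} (h : K = L) (A : E →ₗ[ℝ] E) :
    LinearMap.det ((Submodule.orthogonalProjectionOnto Kᗮ).toLinearMap ∘ₗ A ∘ₗ Kᗮ.subtype)
      = LinearMap.det ((Submodule.orthogonalProjectionOnto Lᗮ).toLinearMap ∘ₗ A ∘ₗ Lᗮ.subtype) := by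
  subst h; rfl

lemma det_adj_congr {K L : Submodule ℝ E} (h : K = L) (f : E →ₗ[ℝ] F) :
    LinearMap.det (LinearMap.adjoint (f ∘ₗ K.subtype) ∘ₗ (f ∘ₗ K.subtype))
      = LinearMap.det (LinearMap.adjoint (f ∘ₗ L.subtype) ∘ₗ (f ∘ₗ L.subtype)) := by
  subst h; rfl

lemma psd_det_nonneg {n : Type*} [Fintype n] [DecidableEq n] {M : Matrix n n ℝ}
    (h : M.PosSemidef) : 0 ≤ M.det := by
  rw [h.isHermitian.det_eq_prod_eigenvalues]
  exact Finset.prod_nonneg fun i _ => by simpa using h.eigenvalues_nonneg i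

lemma det_adjoint_comp_self_nonneg (f : E →ₗ[ℝ] F) :
    0 ≤ LinearMap.det (LinearMap.adjoint f ∘ₗ f) := by
  rw [← LinearMap.det_toMatrix (stdOrthonormalBasis ℝ E).toBasis,
    LinearMap.toMatrix_comp _ (stdOrthonormalBasis ℝ F).toBasis,
    LinearMap.toMatrix_adjoint]
  exact psd_det_nonneg (Matrix.posSemidef_conjTranspose_mul_self _)

lemma detPerp_eq_of_ne_zero (f : E →ₗ[ℝ] F) (hf : f ≠ 0) :
    detPerp f = Real.sqrt (LinearMap.det
      (LinearMap.adjoint (f ∘ₗ (LinearMap.ker f)ᗮ.subtype)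
        ∘ₗ (f ∘ₗ (LinearMap.ker f)ᗮ.subtype))) := by
  rw [detPerp, if_neg hf, det_proj_congr (ker_adjoint_comp_self' f)]
  congr 1
  rw [LinearMap.adjoint_comp, adjoint_subtype'']
  rfl

lemma det_conj_adjoint {K : Type*} [NormedAddCommGroup K] [InnerProductSpace ℝ K]
    [FiniteDimensional ℝ K] (e : K ≃ₗ[ℝ] E) (A : E →ₗ[ℝ] E) :
    LinearMap.det (LinearMap.adjoint (e : K →ₗ[ℝ] E) ∘ₗ A ∘ₗ (e : K →ₗ[ℝ] E))
      = LinearMap.det (LinearMap.adjoint (e : K →ₗ[ℝ] E) ∘ₗ (e : K →ₗ[ℝ] E))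
        * LinearMap.det A := by
  have h : LinearMap.adjoint (e : K →ₗ[ℝ] E) ∘ₗ A ∘ₗ (e : K →ₗ[ℝ] E)
      = (LinearMap.adjoint (e : K →ₗ[ℝ] E) ∘ₗ (e : K →ₗ[ℝ] E))
        ∘ₗ ((e.symm : E →ₗ[ℝ] K) ∘ₗ A ∘ₗ (e : K →ₗ[ℝ] E)) := by
    ext x
    simp
  rw [h, LinearMap.det_comp]
  congr 1
  simpa using LinearMap.det_conj A e.symm

end helpers


/-- If `f : U → V` and `g : V → W` are linear maps of finite-dimensional real inner product
spaces such that `f` is surjective and `g` is injective, then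
`det⊥(g ∘ f) = det⊥(f) · det⊥(g)`. -/
theorem detPerp_comp {U V W : Type*}
    [NormedAddCommGroup U] [InnerProductSpace ℝ U] [FiniteDimensional ℝ U]
    [NormedAddCommGroup V] [InnerProductSpace ℝ V] [FiniteDimensional ℝ V]
    [NormedAddCommGroup W] [InnerProductSpace ℝ W] [FiniteDimensional ℝ W]
    (f : U →ₗ[ℝ] V) (g : V →ₗ[ℝ] W)
    (hf : Function.Surjective f) (hg : Function.Injective g) :
    detPerp (g ∘ₗ f) = detPerp f * detPerp g := by
  by_cases hf0 : f = 0
  · have hV : ∀ v : V, v = 0 := fun v => by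
      obtain ⟨u, hu⟩ := hf v
      rw [← hu, hf0]; rfl
    have hg0 : g = 0 := by ext v; rw [hV v]; simp
    have hgf0 : g ∘ₗ f = 0 := by rw [hf0]; ext x; simp
    simp [detPerp, hf0, hg0, hgf0]
  · have hkg : LinearMap.ker g = ⊥ := LinearMap.ker_eq_bot.mpr hg
    have hg0 : g ≠ 0 := by
      rintro rfl
      apply hf0
      ext u
      exact hg (by simp)
    have hgf0 : g ∘ₗ f ≠ 0 := by
      intro h
      apply hf0
      ext u
      exact hg (by simpa using congrFun (congrArg DFunLike.coe h) u)
    have hker : LinearMap.ker (g ∘ₗ f) = LinearMap.ker f := by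
      rw [LinearMap.ker_comp, hkg, Submodule.comap_bot]
    set K := (LinearMap.ker f)ᗮ with hK
    set f₀ : K →ₗ[ℝ] V := f ∘ₗ K.subtype with hf₀
    have hbij : Function.Bijective f₀ := by
      constructor
      · rw [← LinearMap.ker_eq_bot, Submodule.eq_bot_iff]
        rintro ⟨x, hx⟩ hx0
        have hxk : x ∈ LinearMap.ker f := by
          simpa [hf₀, LinearMap.mem_ker] using hx0
        exact Subtype.ext
          (Submodule.disjoint_def.mp (Submodule.orthogonal_disjoint _) x hxk hx)
      · intro v
        obtain ⟨u, hu⟩ := hf v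
        obtain ⟨y, hy, z, hz, rfl⟩ :=
          Submodule.exists_add_mem_mem_orthogonal (K := LinearMap.ker f) u
        refine ⟨⟨z, hz⟩, ?_⟩
        simp only [hf₀, comp_apply, Submodule.subtype_apply]
        rw [← hu, map_add, LinearMap.mem_ker.mp hy, zero_add]
    set e : K ≃ₗ[ℝ] V := LinearEquiv.ofBijective f₀ hbij with he
    have hecoe : (e : K →ₗ[ℝ] V) = f₀ := rfl
    rw [detPerp_eq_of_ne_zero _ hgf0, detPerp_eq_of_ne_zero _ hf0,
      detPerp_eq_of_ne_zero _ hg0]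
    have hKgf : (LinearMap.ker (g ∘ₗ f))ᗮ = K := by rw [hker]
    rw [det_adj_congr hKgf (g ∘ₗ f)]
    have h1 : LinearMap.det
        (LinearMap.adjoint ((g ∘ₗ f) ∘ₗ K.subtype) ∘ₗ ((g ∘ₗ f) ∘ₗ K.subtype))
        = LinearMap.det (LinearMap.adjoint f₀ ∘ₗ f₀)
          * LinearMap.det (LinearMap.adjoint g ∘ₗ g) := by
      have h2 : (g ∘ₗ f) ∘ₗ K.subtype = g ∘ₗ f₀ := rfl
      rw [h2, LinearMap.adjoint_comp]
      have h3 : (LinearMap.adjoint f₀ ∘ₗ LinearMap.adjoint g) ∘ₗ (g ∘ₗ f₀)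
          = LinearMap.adjoint (e : K →ₗ[ℝ] V)
            ∘ₗ (LinearMap.adjoint g ∘ₗ g) ∘ₗ (e : K →ₗ[ℝ] V) := rfl
      rw [h3, det_conj_adjoint, hecoe]
    have hgtop : LinearMap.det
        (LinearMap.adjoint (g ∘ₗ (LinearMap.ker g)ᗮ.subtype)
          ∘ₗ (g ∘ₗ (LinearMap.ker g)ᗮ.subtype))
        = LinearMap.det (LinearMap.adjoint g ∘ₗ g) := by
      have h4 : (LinearMap.ker g)ᗮ = (⊤ : Submodule ℝ V) := by
        rw [hkg, Submodule.bot_orthogonal_eq_top]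
      rw [det_adj_congr h4 g]
      set t : (⊤ : Submodule ℝ V) ≃ₗ[ℝ] V := Submodule.topEquiv with ht
      have h5 : g ∘ₗ (⊤ : Submodule ℝ V).subtype = g ∘ₗ (t : (⊤ : Submodule ℝ V) →ₗ[ℝ] V) := by
        ext x; rfl
      have h6 : LinearMap.adjoint (g ∘ₗ (t : (⊤ : Submodule ℝ V) →ₗ[ℝ] V))
            ∘ₗ (g ∘ₗ (t : (⊤ : Submodule ℝ V) →ₗ[ℝ] V))
          = LinearMap.adjoint (t : (⊤ : Submodule ℝ V) →ₗ[ℝ] V)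
            ∘ₗ (LinearMap.adjoint g ∘ₗ g) ∘ₗ (t : (⊤ : Submodule ℝ V) →ₗ[ℝ] V) := by
        rw [LinearMap.adjoint_comp]; rfl
      rw [h5, h6, det_conj_adjoint]
      have h7 : LinearMap.adjoint (t : (⊤ : Submodule ℝ V) →ₗ[ℝ] V)
          ∘ₗ (t : (⊤ : Submodule ℝ V) →ₗ[ℝ] V) = LinearMap.id := by
        have h8 : (t : (⊤ : Submodule ℝ V) →ₗ[ℝ] V) = (⊤ : Submodule ℝ V).subtype := by
          ext x; rfl
        rw [h8, adjoint_subtype'']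
        ext x
        simp [Submodule.orthogonalProjectionOnto_mem_subspace_eq_self]
      rw [h7]
      simp
    rw [h1, hgtop, Real.sqrt_mul (det_adjoint_comp_self_nonneg f₀)]
end

section
/- Let f₁ : U₁ → V₁, f₂ : U₂ → V₂ and f₃ : U₂ → V₁ be linear maps of finite-dimensional real inner product spaces such that f₁ is surjective and f₂ is injective. Then the block map U₁ ⊕ U₂ → V₁ ⊕ V₂ given by the matrix (f₁ f₃ ; 0 f₂), i.e. sending (u₁,u₂) to (f₁(u₁)+f₃(u₂), f₂(u₂)), satisfies det⊥((f₁ f₃ ; 0 f₂)) = det⊥(f₁) · det⊥(f₂). -/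
open Submodule Module Finset Matrix
open scoped RealInnerProductSpace

noncomputable section AuxDetPerp

variable {V W : Type*} [NormedAddCommGroup V] [InnerProductSpace ℝ V]
    [NormedAddCommGroup W] [InnerProductSpace ℝ W]
    [FiniteDimensional ℝ V] [FiniteDimensional ℝ W]

/-- An auxiliary equivalence between `p.prod q` and `p × q`. -/
def subProdEquivAux {R M N : Type*} [Ring R] [AddCommGroup M] [AddCommGroup N]
    [Module R M] [Module R N] (p : Submodule R M) (q : Submodule R N) :
    (p.prod q) ≃ₗ[R] p × q where
  toFun x := (⟨x.1.1, x.2.1⟩, ⟨x.1.2, x.2.2⟩)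
  invFun x := ⟨(x.1.1, x.2.1), x.1.2, x.2.2⟩
  map_add' _ _ := rfl
  map_smul' _ _ := rfl
  left_inv _ := rfl
  right_inv _ := rfl

lemma ker_adjoint_comp_self_aux (f : V →ₗ[ℝ] W) :
    LinearMap.ker (LinearMap.adjoint f ∘ₗ f) = LinearMap.ker f := by
  ext x
  simp only [LinearMap.mem_ker, LinearMap.comp_apply]
  constructor
  · intro h
    have h0 : ⟪f x, f x⟫ = 0 := by
      rw [← LinearMap.adjoint_inner_right, h, inner_zero_right]
    exact inner_self_eq_zero.mp h0
  · intro h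
    rw [h, map_zero]

/-- The unconditional "square" appearing in `detPerp`. -/
def detAux (f : V →ₗ[ℝ] W) : ℝ :=
  LinearMap.det
    ((orthogonalProjection (LinearMap.ker f)ᗮ).toLinearMap
      ∘ₗ (LinearMap.adjoint f ∘ₗ f)
      ∘ₗ (LinearMap.ker f)ᗮ.subtype)

lemma det_orthProj_congr (g : V →ₗ[ℝ] V) (p q : Submodule ℝ V) (h : p = q) :
    LinearMap.det ((orthogonalProjection pᗮ).toLinearMap ∘ₗ g ∘ₗ pᗮ.subtype) =
    LinearMap.det ((orthogonalProjection qᗮ).toLinearMap ∘ₗ g ∘ₗ qᗮ.subtype) := by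
  subst h; rfl

lemma det_proj_congr_s2 (g : V →ₗ[ℝ] V) (s t : Submodule ℝ V) (h : s = t) :
    LinearMap.det ((orthogonalProjection s).toLinearMap ∘ₗ g ∘ₗ s.subtype) =
    LinearMap.det ((orthogonalProjection t).toLinearMap ∘ₗ g ∘ₗ t.subtype) := by
  subst h; rfl

lemma detPerp_eq_sqrt (f : V →ₗ[ℝ] W) : detPerp f = Real.sqrt (detAux f) := by
  unfold detPerp detAux
  split_ifs with h
  · subst h
    rw [det_orthProj_congr _ _ _ LinearMap.ker_zero,
      det_proj_congr_s2 _ _ _ Submodule.top_orthogonal_eq_bot,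
      LinearMap.det_eq_one_of_subsingleton, Real.sqrt_one]
  · rw [det_orthProj_congr (LinearMap.adjoint f ∘ₗ f) _ _ (ker_adjoint_comp_self_aux f)]

/-- Build an orthonormal basis of a submodule from ambient orthonormal vectors. -/
lemma exists_orthonormalBasis_of_mem {ι : Type*} [Fintype ι] (s : Submodule ℝ V) (v : ι → V)
    (hv : Orthonormal ℝ v) (hmem : ∀ i, v i ∈ s) (hcard : Fintype.card ι = finrank ℝ s) :
    ∃ β : OrthonormalBasis ι ℝ s, ∀ i, (β i : V) = v i := by
  set v' : ι → s := fun i => ⟨v i, hmem i⟩ with hv'def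
  have hv' : Orthonormal ℝ v' := ⟨fun i => hv.1 i, fun i j h => hv.2 h⟩
  have hsp : ⊤ ≤ Submodule.span ℝ (Set.range v') :=
    (hv'.linearIndependent.span_eq_top_of_card_eq_finrank' (by simpa using hcard)).ge
  exact ⟨OrthonormalBasis.mk hv' hsp, fun i => by rw [OrthonormalBasis.coe_mk]⟩

/-- Key lemma: `detPerp f` is the absolute value of the determinant of any matrix
representing `f` in orthonormal coordinates on `(ker f)ᗮ` and on the target. -/
lemma detPerp_eq_abs_det {ι : Type*} [Fintype ι] [DecidableEq ι]
    (f : V →ₗ[ℝ] W) (b : ι → V) (c : ι → W) (M : Matrix ι ι ℝ)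
    (hb : Orthonormal ℝ b) (hbmem : ∀ i, b i ∈ (LinearMap.ker f)ᗮ)
    (hcard : Fintype.card ι = finrank ℝ (LinearMap.ker f)ᗮ)
    (hc : Orthonormal ℝ c)
    (hM : ∀ j, f (b j) = ∑ k, M k j • c k) :
    detPerp f = |M.det| := by
  obtain ⟨β, hβ⟩ := exists_orthonormalBasis_of_mem _ b hb hbmem hcard
  rw [detPerp_eq_sqrt]
  have entry : ∀ k j, LinearMap.toMatrix β.toBasis β.toBasis
      ((orthogonalProjection (LinearMap.ker f)ᗮ).toLinearMap
        ∘ₗ (LinearMap.adjoint f ∘ₗ f) ∘ₗ (LinearMap.ker f)ᗮ.subtype) k j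
      = ∑ l, M l k * M l j := by
    intro k j
    rw [LinearMap.toMatrix_apply, OrthonormalBasis.coe_toBasis,
      OrthonormalBasis.coe_toBasis_repr_apply, OrthonormalBasis.repr_apply_apply]
    have hAβ : ((orthogonalProjection (LinearMap.ker f)ᗮ).toLinearMap
        ∘ₗ (LinearMap.adjoint f ∘ₗ f) ∘ₗ (LinearMap.ker f)ᗮ.subtype) (β j)
        = orthogonalProjection (LinearMap.ker f)ᗮ ((LinearMap.adjoint f) (f (β j : V))) := rfl
    rw [hAβ, inner_orthogonalProjection_eq_of_mem_left, LinearMap.adjoint_inner_right,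
      hβ k, hβ j, hM k, hM j, inner_sum]
    simp only [sum_inner, real_inner_smul_left, real_inner_smul_right,
      orthonormal_iff_ite.mp hc, mul_ite, mul_one, mul_zero, Finset.sum_ite_eq',
      Finset.mem_univ, if_true]
    exact Finset.sum_congr rfl fun l _ => by ring
  have hmat : LinearMap.toMatrix β.toBasis β.toBasis
      ((orthogonalProjection (LinearMap.ker f)ᗮ).toLinearMap
        ∘ₗ (LinearMap.adjoint f ∘ₗ f) ∘ₗ (LinearMap.ker f)ᗮ.subtype) = Mᵀ * M := by
    ext k j
    rw [entry, Matrix.mul_apply]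
    rfl
  have : detAux f = M.det ^ 2 := by
    unfold detAux
    rw [← LinearMap.det_toMatrix β.toBasis, hmat, Matrix.det_mul,
      Matrix.det_transpose, sq]
  rw [this, Real.sqrt_sq_eq_abs]

end AuxDetPerp

set_option maxHeartbeats 2000000 in
/-- For linear maps `f₁ : U₁ → V₁`, `f₂ : U₂ → V₂`, `f₃ : U₂ → V₁` of finite-dimensional
real inner product spaces with `f₁` surjective and `f₂` injective, the block map
`(f₁ f₃ ; 0 f₂) : U₁ ⊕ U₂ → V₁ ⊕ V₂` (orthogonal direct sums, i.e. `L²`-products),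
sending `(u₁, u₂)` to `(f₁ u₁ + f₃ u₂, f₂ u₂)`, satisfies
`det⊥((f₁ f₃ ; 0 f₂)) = det⊥(f₁) · det⊥(f₂)`. -/
theorem detPerp_block {U₁ U₂ V₁ V₂ : Type*}
    [NormedAddCommGroup U₁] [InnerProductSpace ℝ U₁] [FiniteDimensional ℝ U₁]
    [NormedAddCommGroup U₂] [InnerProductSpace ℝ U₂] [FiniteDimensional ℝ U₂]
    [NormedAddCommGroup V₁] [InnerProductSpace ℝ V₁] [FiniteDimensional ℝ V₁]
    [NormedAddCommGroup V₂] [InnerProductSpace ℝ V₂] [FiniteDimensional ℝ V₂]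
    (f₁ : U₁ →ₗ[ℝ] V₁) (f₂ : U₂ →ₗ[ℝ] V₂) (f₃ : U₂ →ₗ[ℝ] V₁)
    (h₁ : Function.Surjective f₁) (h₂ : Function.Injective f₂)
    (F : WithLp 2 (U₁ × U₂) →ₗ[ℝ] WithLp 2 (V₁ × V₂))
    (hF : ∀ u : WithLp 2 (U₁ × U₂),
      (WithLp.linearEquiv 2 ℝ (V₁ × V₂)) (F u) =
        (f₁ ((WithLp.linearEquiv 2 ℝ (U₁ × U₂)) u).1 + f₃ ((WithLp.linearEquiv 2 ℝ (U₁ × U₂)) u).2,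
         f₂ ((WithLp.linearEquiv 2 ℝ (U₁ × U₂)) u).2)) :
    detPerp F = detPerp f₁ * detPerp f₂ := by
  classical
  set E₁ := WithLp.linearEquiv 2 ℝ (U₁ × U₂) with hE₁
  set E₂ := WithLp.linearEquiv 2 ℝ (V₁ × V₂) with hE₂
  have hF' : ∀ u, F u = E₂.symm (f₁ (E₁ u).1 + f₃ (E₁ u).2, f₂ (E₁ u).2) := by
    intro u
    rw [← hF u, LinearEquiv.symm_apply_apply]
  -- dimensions
  have hV₁ : finrank ℝ ↥(LinearMap.ker f₁)ᗮ = finrank ℝ V₁ := by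
    have t1 := Submodule.finrank_add_finrank_orthogonal (K := LinearMap.ker f₁)
    have t2 := LinearMap.finrank_range_add_finrank_ker f₁
    have t3 : finrank ℝ (LinearMap.range f₁) = finrank ℝ V₁ := by
      rw [LinearMap.range_eq_top.mpr h₁]; exact finrank_top ℝ V₁
    omega
  have hV₂ : finrank ℝ ↥(LinearMap.range f₂) = finrank ℝ U₂ :=
    LinearMap.finrank_range_of_inj h₂
  set n₁ := finrank ℝ V₁
  set n₂ := finrank ℝ U₂
  -- orthonormal bases
  set b₁ : OrthonormalBasis (Fin n₁) ℝ ↥(LinearMap.ker f₁)ᗮ :=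
    (stdOrthonormalBasis ℝ ↥(LinearMap.ker f₁)ᗮ).reindex (finCongr hV₁) with hb₁def
  set c₁ : OrthonormalBasis (Fin n₁) ℝ V₁ := stdOrthonormalBasis ℝ V₁ with hc₁def
  set b₂ : OrthonormalBasis (Fin n₂) ℝ U₂ := stdOrthonormalBasis ℝ U₂ with hb₂def
  set c₂ : OrthonormalBasis (Fin n₂) ℝ ↥(LinearMap.range f₂) :=
    (stdOrthonormalBasis ℝ ↥(LinearMap.range f₂)).reindex (finCongr hV₂) with hc₂def
  -- matrices
  set M₁ : Matrix (Fin n₁) (Fin n₁) ℝ := fun k i => ⟪c₁ k, f₁ (b₁ i : U₁)⟫ with hM₁def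
  set M₂ : Matrix (Fin n₂) (Fin n₂) ℝ := fun k j => ⟪(c₂ k : V₂), f₂ (b₂ j)⟫ with hM₂def
  set M₃ : Matrix (Fin n₁) (Fin n₂) ℝ := fun k j => ⟪c₁ k, f₃ (b₂ j)⟫ with hM₃def
  have hM₁ : ∀ i, f₁ (b₁ i : U₁) = ∑ k, M₁ k i • c₁ k := fun i =>
    (c₁.sum_repr' (f₁ (b₁ i : U₁))).symm
  have hM₃ : ∀ j, f₃ (b₂ j) = ∑ k, M₃ k j • c₁ k := fun j =>
    (c₁.sum_repr' (f₃ (b₂ j))).symm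
  have hM₂ : ∀ j, f₂ (b₂ j) = ∑ k, M₂ k j • (c₂ k : V₂) := by
    intro j
    have h := c₂.sum_repr' (⟨f₂ (b₂ j), LinearMap.mem_range_self f₂ _⟩ : LinearMap.range f₂)
    have h0 : f₂ (b₂ j) =
        ((⟨f₂ (b₂ j), LinearMap.mem_range_self f₂ _⟩ : LinearMap.range f₂) : V₂) := rfl
    rw [h0, ← h]
    simp [hM₂def, Submodule.coe_inner]
  -- detPerp f₁
  have hd₁ : detPerp f₁ = |M₁.det| := by
    refine detPerp_eq_abs_det f₁ (fun i => (b₁ i : U₁)) c₁ M₁ ?_ (fun i => (b₁ i).2) ?_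
      c₁.orthonormal hM₁
    · exact b₁.orthonormal.comp_linearIsometry (LinearMap.ker f₁)ᗮ.subtypeₗᵢ
    · simp [hV₁]
  -- detPerp f₂
  have hd₂ : detPerp f₂ = |M₂.det| := by
    have hker₂ : LinearMap.ker f₂ = ⊥ := LinearMap.ker_eq_bot.mpr h₂
    refine detPerp_eq_abs_det f₂ b₂ (fun k => (c₂ k : V₂)) M₂ b₂.orthonormal ?_ ?_ ?_ hM₂
    · intro i; rw [hker₂, Submodule.bot_orthogonal_eq_top]; trivial
    · rw [hker₂, Submodule.bot_orthogonal_eq_top]; simp [finrank_top]; rfl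
    · exact c₂.orthonormal.comp_linearIsometry (LinearMap.range f₂).subtypeₗᵢ
  -- the block basis and block matrix for F
  set b : Fin n₁ ⊕ Fin n₂ → WithLp 2 (U₁ × U₂) :=
    Sum.elim (fun i => E₁.symm ((b₁ i : U₁), 0)) (fun j => E₁.symm (0, b₂ j)) with hbdef
  set c : Fin n₁ ⊕ Fin n₂ → WithLp 2 (V₁ × V₂) :=
    Sum.elim (fun k => E₂.symm (c₁ k, 0)) (fun k => E₂.symm (0, (c₂ k : V₂))) with hcdef
  have hb : Orthonormal ℝ b := by
    rw [orthonormal_iff_ite]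
    rintro (i|i) (j|j) <;>
      simp [hbdef, hE₁, WithLp.linearEquiv_symm_apply, WithLp.prod_inner_apply,
        WithLp.toLp_fst, WithLp.toLp_snd, ← Submodule.coe_inner,
        orthonormal_iff_ite.mp b₁.orthonormal, orthonormal_iff_ite.mp b₂.orthonormal,
        Sum.inl.injEq, Sum.inr.injEq]
  have hc : Orthonormal ℝ c := by
    rw [orthonormal_iff_ite]
    rintro (i|i) (j|j) <;>
      simp [hcdef, hE₂, WithLp.linearEquiv_symm_apply, WithLp.prod_inner_apply,
        WithLp.toLp_fst, WithLp.toLp_snd, ← Submodule.coe_inner,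
        orthonormal_iff_ite.mp c₁.orthonormal, orthonormal_iff_ite.mp c₂.orthonormal,
        Sum.inl.injEq, Sum.inr.injEq]
  -- the kernel of F
  have hker : ∀ y, F y = 0 → (E₁ y).2 = 0 ∧ f₁ (E₁ y).1 = 0 := by
    intro y hy
    have h0 := hF y
    rw [hy, map_zero] at h0
    have h2 : (E₁ y).2 = 0 := h₂ (by simpa using congrArg Prod.snd h0.symm)
    have h1 : f₁ (E₁ y).1 = 0 := by simpa [h2] using congrArg Prod.fst h0.symm
    exact ⟨h2, h1⟩
  have hbmem : ∀ s, b s ∈ (LinearMap.ker F)ᗮ := by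
    intro s
    rw [Submodule.mem_orthogonal]
    intro y hy
    obtain ⟨h2, h1⟩ := hker y (LinearMap.mem_ker.mp hy)
    have hy1 : (E₁ y).1 ∈ LinearMap.ker f₁ := LinearMap.mem_ker.mpr h1
    cases s with
    | inl i =>
      have : ⟪y, b (Sum.inl i)⟫ = ⟪(E₁ y).1, (b₁ i : U₁)⟫ + ⟪(E₁ y).2, (0 : U₂)⟫ := rfl
      rw [this, h2, inner_zero_left, add_zero]
      exact (Submodule.mem_orthogonal (LinearMap.ker f₁) _).mp (b₁ i).2 _ hy1
    | inr j =>
      have : ⟪y, b (Sum.inr j)⟫ = ⟪(E₁ y).1, (0 : U₁)⟫ + ⟪(E₁ y).2, b₂ j⟫ := rfl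
      rw [this, h2, inner_zero_right, inner_zero_left, zero_add]
  -- dimension of (ker F)ᗮ
  have hkerF : LinearMap.ker F = Submodule.map
      (E₁.symm : (U₁ × U₂) →ₗ[ℝ] WithLp 2 (U₁ × U₂)) ((LinearMap.ker f₁).prod ⊥) := by
    ext z
    rw [Submodule.mem_map_equiv]
    simp only [LinearEquiv.symm_symm, Submodule.mem_prod, LinearMap.mem_ker, Submodule.mem_bot,
      LinearEquiv.coe_coe]
    constructor
    · intro hz
      obtain ⟨h2, h1⟩ := hker z hz
      exact ⟨h1, h2⟩
    · rintro ⟨hz1, hz2⟩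
      rw [hF' z, hz1, hz2]
      simp
  have hkerdim : finrank ℝ ↥(LinearMap.ker F) = finrank ℝ ↥(LinearMap.ker f₁) := by
    rw [hkerF, LinearEquiv.finrank_map_eq,
      LinearEquiv.finrank_eq (subProdEquivAux (LinearMap.ker f₁) (⊥ : Submodule ℝ U₂)),
      Module.finrank_prod, finrank_bot, add_zero]
  have hcardF : Fintype.card (Fin n₁ ⊕ Fin n₂) = finrank ℝ ↥(LinearMap.ker F)ᗮ := by
    have t1 := Submodule.finrank_add_finrank_orthogonal (K := LinearMap.ker F)
    have t2 : finrank ℝ (WithLp 2 (U₁ × U₂)) = finrank ℝ U₁ + n₂ := by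
      rw [LinearEquiv.finrank_eq E₁, Module.finrank_prod]
    have t3 := Submodule.finrank_add_finrank_orthogonal (K := LinearMap.ker f₁)
    simp only [Fintype.card_sum, Fintype.card_fin]
    omega
  -- the block representation
  have hMF : ∀ s, F (b s) = ∑ t, (Matrix.fromBlocks M₁ M₃ 0 M₂) t s • c t := by
    have pair₁ : ∀ (k : Fin n₁) (r : ℝ), r • c (Sum.inl k) = E₂.symm (r • c₁ k, 0) := by
      intro k r
      rw [hcdef]
      simp only [Sum.elim_inl, ← _root_.map_smul]
      congr 1
      rw [Prod.smul_mk, smul_zero]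
    have pair₂ : ∀ (k : Fin n₂) (r : ℝ), r • c (Sum.inr k) = E₂.symm (0, r • (c₂ k : V₂)) := by
      intro k r
      rw [hcdef]
      simp only [Sum.elim_inr, ← _root_.map_smul]
      congr 1
      rw [Prod.smul_mk, smul_zero]
    rintro (i|j)
    · rw [hF']
      simp only [hbdef, Sum.elim_inl, LinearEquiv.apply_symm_apply, map_zero, add_zero]
      rw [Fintype.sum_sum_type]
      simp only [Matrix.fromBlocks_apply₁₁, Matrix.fromBlocks_apply₂₁, Matrix.zero_apply,
        pair₁, pair₂]
      rw [← map_sum, ← map_sum, ← map_add]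
      congr 1
      rw [Prod.ext_iff]
      constructor
      · simp only [Prod.fst_sum, Prod.fst_add, Prod.mk_add_mk, add_zero, zero_add]
        simp [← hM₁ i]
      · simp [Prod.snd_sum]
    · rw [hF']
      simp only [hbdef, Sum.elim_inr, LinearEquiv.apply_symm_apply, map_zero, zero_add]
      rw [Fintype.sum_sum_type]
      simp only [Matrix.fromBlocks_apply₁₂, Matrix.fromBlocks_apply₂₂, pair₁, pair₂]
      rw [← map_sum, ← map_sum, ← map_add]
      congr 1
      rw [Prod.ext_iff]
      constructor
      · simp only [Prod.fst_sum, Prod.fst_add, Prod.mk_add_mk, add_zero, zero_add]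
        simp [← hM₃ j]
      · simp only [Prod.snd_sum, Prod.snd_add, Prod.mk_add_mk, add_zero, zero_add]
        simp [← hM₂ j]
  have hdF : detPerp F = |(Matrix.fromBlocks M₁ M₃ 0 M₂).det| :=
    detPerp_eq_abs_det F b c _ hb hbmem hcardF hc hMF
  rw [hdF, hd₁, hd₂, Matrix.det_fromBlocks_zero₂₁, abs_mul]
end

section
/- Let f : U → V be a linear map of finite-dimensional real inner product spaces. Then det⊥(f) = det⊥(f*) = √(det⊥(f*f)) = √(det⊥(ff*)). -/
namespace DetPerpAux

open LinearMap Submodule Module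
open scoped RealInnerProductSpace

variable {U V : Type*} [NormedAddCommGroup U] [InnerProductSpace ℝ U] [FiniteDimensional ℝ U]
  [NormedAddCommGroup V] [InnerProductSpace ℝ V] [FiniteDimensional ℝ V]

lemma ker_gram (f : U →ₗ[ℝ] V) : LinearMap.ker (LinearMap.adjoint f ∘ₗ f) = LinearMap.ker f := by
  ext x
  simp only [LinearMap.mem_ker, LinearMap.comp_apply]
  constructor
  · intro h
    have h2 : ⟪f x, f x⟫ = 0 := by
      rw [← LinearMap.adjoint_inner_right f x (f x), h, inner_zero_right]
    exact inner_self_eq_zero.mp h2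
  · intro h
    simp [h]

lemma gram_mem (f : U →ₗ[ℝ] V) (x : U) :
    LinearMap.adjoint f (f x) ∈ (LinearMap.ker (LinearMap.adjoint f ∘ₗ f))ᗮ := by
  rw [Submodule.mem_orthogonal]
  intro u hu
  rw [ker_gram] at hu
  rw [LinearMap.adjoint_inner_right f u (f x), LinearMap.mem_ker.mp hu, inner_zero_left]

lemma ker_adjoint (f : U →ₗ[ℝ] V) :
    LinearMap.ker (LinearMap.adjoint f) = (LinearMap.range f)ᗮ := by
  ext y
  simp only [LinearMap.mem_ker, Submodule.mem_orthogonal]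
  constructor
  · rintro h u ⟨x, rfl⟩
    rw [real_inner_comm, ← LinearMap.adjoint_inner_left f x y, h, inner_zero_left]
  · intro h
    have h2 : ⟪LinearMap.adjoint f y, LinearMap.adjoint f y⟫ = 0 := by
      rw [LinearMap.adjoint_inner_left]
      rw [real_inner_comm]
      exact h _ ⟨_, rfl⟩
    exact inner_self_eq_zero.mp h2

omit [FiniteDimensional ℝ V] in
lemma finrank_orth_ker (f : U →ₗ[ℝ] V) :
    finrank ℝ ((LinearMap.ker f)ᗮ : Submodule ℝ U) = finrank ℝ (LinearMap.range f) := by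
  have h1 := Submodule.finrank_add_finrank_orthogonal (K := LinearMap.ker f)
  have h2 := LinearMap.finrank_range_add_finrank_ker f
  omega

/-- The endomorphism of `(ker (f* ∘ f))ᗮ` induced by `f* ∘ f`. -/
noncomputable def rmap (f : U →ₗ[ℝ] V) :
    (LinearMap.ker (LinearMap.adjoint f ∘ₗ f))ᗮ →ₗ[ℝ] (LinearMap.ker (LinearMap.adjoint f ∘ₗ f))ᗮ :=
  (Submodule.orthogonalProjectionOnto (LinearMap.ker (LinearMap.adjoint f ∘ₗ f))ᗮ).toLinearMap
    ∘ₗ (LinearMap.adjoint f ∘ₗ f)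
    ∘ₗ (LinearMap.ker (LinearMap.adjoint f ∘ₗ f))ᗮ.subtype

lemma rmap_coe (f : U →ₗ[ℝ] V) (x : (LinearMap.ker (LinearMap.adjoint f ∘ₗ f))ᗮ) :
    (rmap f x : U) = LinearMap.adjoint f (f x) := by
  simp only [rmap, LinearMap.comp_apply, ContinuousLinearMap.coe_coe, Submodule.coe_subtype]
  exact Submodule.starProjection_eq_self_iff.mpr (gram_mem f x)

lemma rmap_symmetric (f : U →ₗ[ℝ] V) : (rmap f).IsSymmetric := by
  intro x y
  rw [Submodule.coe_inner, Submodule.coe_inner, rmap_coe, rmap_coe,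
    LinearMap.adjoint_inner_left, LinearMap.adjoint_inner_right]

lemma rmap_pos (f : U →ₗ[ℝ] V) (x : (LinearMap.ker (LinearMap.adjoint f ∘ₗ f))ᗮ) :
    0 ≤ ⟪rmap f x, x⟫ := by
  rw [Submodule.coe_inner, rmap_coe, LinearMap.adjoint_inner_left]
  exact real_inner_self_nonneg

/-- The determinant of a positive symmetric operator is nonnegative. -/
lemma det_nonneg_of_symm {E : Type*} [NormedAddCommGroup E] [InnerProductSpace ℝ E]
    [FiniteDimensional ℝ E] {T : E →ₗ[ℝ] E} (hT : T.IsSymmetric)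
    (hpos : ∀ x, 0 ≤ ⟪T x, x⟫) : 0 ≤ LinearMap.det T := by
  have hn : finrank ℝ E = finrank ℝ E := rfl
  set b := hT.eigenvectorBasis hn with hb
  have hdet : LinearMap.det T = ∏ i, hT.eigenvalues hn i := by
    rw [← LinearMap.det_toMatrix b.toBasis T]
    have hm : LinearMap.toMatrix b.toBasis b.toBasis T =
        Matrix.diagonal (hT.eigenvalues hn) := by
      ext i j
      rw [LinearMap.toMatrix_apply]
      simp only [OrthonormalBasis.coe_toBasis, hT.apply_eigenvectorBasis hn j, map_smul,
        OrthonormalBasis.repr_self]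
      by_cases h : i = j
      · subst h; simp [Matrix.diagonal, hb, hT.apply_eigenvectorBasis hn]
      · simp [Matrix.diagonal, h, Ne.symm h, EuclideanSpace.single_apply, hb,
          hT.apply_eigenvectorBasis hn]
    rw [hm, Matrix.det_diagonal]
  rw [hdet]
  apply Finset.prod_nonneg
  intro i _
  have h2 := hpos (b i)
  rw [hT.apply_eigenvectorBasis hn i, real_inner_smul_left,
    real_inner_self_eq_norm_sq, b.orthonormal.1 i] at h2
  simpa using h2

lemma det_rmap_nonneg (f : U →ₗ[ℝ] V) : 0 ≤ LinearMap.det (rmap f) :=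
  det_nonneg_of_symm (rmap_symmetric f) (rmap_pos f)

lemma fmem (f : U →ₗ[ℝ] V) (x : (LinearMap.ker (LinearMap.adjoint f ∘ₗ f))ᗮ) :
    f (x : U) ∈
      (LinearMap.ker (LinearMap.adjoint (LinearMap.adjoint f) ∘ₗ LinearMap.adjoint f))ᗮ := by
  rw [Submodule.mem_orthogonal]
  intro u hu
  rw [ker_gram (LinearMap.adjoint f)] at hu
  rw [real_inner_comm, ← LinearMap.adjoint_inner_right f (x : U) u,
    LinearMap.mem_ker.mp hu, inner_zero_right]

/-- The isomorphism induced by `f` between `(ker (f* ∘ f))ᗮ` and `(ker (f** ∘ f*))ᗮ`. -/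
noncomputable def emap (f : U →ₗ[ℝ] V) :
    ((LinearMap.ker (LinearMap.adjoint f ∘ₗ f))ᗮ : Submodule ℝ U) ≃ₗ[ℝ]
    ((LinearMap.ker (LinearMap.adjoint (LinearMap.adjoint f) ∘ₗ LinearMap.adjoint f))ᗮ :
      Submodule ℝ V) := by
  refine LinearMap.linearEquivOfInjective
    (LinearMap.codRestrict _
      (f ∘ₗ (LinearMap.ker (LinearMap.adjoint f ∘ₗ f))ᗮ.subtype) (fun x => show (f ∘ₗ (LinearMap.ker (LinearMap.adjoint f ∘ₗ f))ᗮ.subtype) x ∈ _ from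
        fmem f x))
    ?_ ?_
  · rw [← LinearMap.ker_eq_bot, LinearMap.ker_codRestrict]
    rw [Submodule.eq_bot_iff]
    rintro x hx
    rw [LinearMap.mem_ker, LinearMap.comp_apply, Submodule.coe_subtype] at hx
    have hker : (x : U) ∈ LinearMap.ker (LinearMap.adjoint f ∘ₗ f) := by
      have hx' : (x : U) ∈ LinearMap.ker f := hx
      rwa [← ker_gram f] at hx'
    have := x.2
    rw [Submodule.mem_orthogonal] at this
    have h0 : ⟪(x : U), (x : U)⟫ = 0 := this _ hker
    ext1
    exact inner_self_eq_zero.mp h0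
  · rw [ker_gram, ker_gram, ker_adjoint, Submodule.orthogonal_orthogonal]
    exact finrank_orth_ker f

lemma det_rmap_adjoint (f : U →ₗ[ℝ] V) :
    LinearMap.det (rmap f) = LinearMap.det (rmap (LinearMap.adjoint f)) := by
  rw [← LinearMap.det_conj (rmap f) (emap f)]
  have he : ∀ x : ((LinearMap.ker (LinearMap.adjoint f ∘ₗ f))ᗮ : Submodule ℝ U),
      ((emap f x : _) : V) = f (x : U) := fun x => rfl
  have key : ((emap f : _ →ₗ[ℝ] _) ∘ₗ rmap f ∘ₗ ((emap f).symm : _ →ₗ[ℝ] _))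
      = rmap (LinearMap.adjoint f) := by
    ext y
    have h1 : f (((emap f).symm y : _) : U) = (y : V) := by
      rw [← he ((emap f).symm y), (emap f).apply_symm_apply]
    simp only [LinearMap.comp_apply, LinearEquiv.coe_coe]
    rw [he, rmap_coe, rmap_coe, h1]
    generalize ((y : _) : V) = w
    rw [LinearMap.adjoint_adjoint]
  rw [key]

lemma det_rmap_gram (f : U →ₗ[ℝ] V) :
    LinearMap.det (rmap (LinearMap.adjoint f ∘ₗ f)) = (LinearMap.det (rmap f)) ^ 2 := by
  have hS :
      (LinearMap.ker (LinearMap.adjoint (LinearMap.adjoint f ∘ₗ f) ∘ₗ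
        (LinearMap.adjoint f ∘ₗ f)))ᗮ = (LinearMap.ker (LinearMap.adjoint f ∘ₗ f))ᗮ :=
    congrArg Submodule.orthogonal (ker_gram (LinearMap.adjoint f ∘ₗ f))
  set e := LinearEquiv.ofEq _ _ hS with hedef
  rw [← LinearMap.det_conj (rmap (LinearMap.adjoint f ∘ₗ f)) e]
  have key : ((e : _ →ₗ[ℝ] _) ∘ₗ rmap (LinearMap.adjoint f ∘ₗ f) ∘ₗ ((e.symm : _ →ₗ[ℝ] _)))
      = rmap f ∘ₗ rmap f := by
    ext y
    have hcoe : ∀ x, ((e x : _) : U) = (x : U) := fun x => rfl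
    have hcoe' : ∀ x, ((e.symm x : _) : U) = (x : U) := fun x => rfl
    simp only [LinearMap.comp_apply, LinearEquiv.coe_coe]
    rw [hcoe, rmap_coe, hcoe', rmap_coe, rmap_coe]
    generalize ((y : _) : U) = w
    simp only [LinearMap.adjoint_comp, LinearMap.adjoint_adjoint, LinearMap.comp_apply]
  rw [key, LinearMap.det_comp, sq]

lemma gram_eq_zero_iff (f : U →ₗ[ℝ] V) : LinearMap.adjoint f ∘ₗ f = 0 ↔ f = 0 := by
  constructor
  · intro h
    have hk := ker_gram f
    rw [h, LinearMap.ker_zero] at hk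
    exact LinearMap.ker_eq_top.mp hk.symm
  · intro h
    simp [h]

lemma adjoint_eq_zero_iff (f : U →ₗ[ℝ] V) : LinearMap.adjoint f = 0 ↔ f = 0 := by
  constructor
  · intro h
    have := congrArg LinearMap.adjoint h
    rwa [LinearMap.adjoint_adjoint, show LinearMap.adjoint (0 : V →ₗ[ℝ] U) = 0 by
      apply LinearMap.ext; intro x
      apply ext_inner_left ℝ; intro w
      simp [LinearMap.adjoint_inner_right]] at this
  · intro h
    subst h
    apply LinearMap.ext; intro x
    apply ext_inner_left ℝ; intro w
    simp [LinearMap.adjoint_inner_right]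

lemma detPerp_of_eq {f : U →ₗ[ℝ] V} (h : f = 0) : detPerp f = 1 := by
  rw [detPerp]
  exact if_pos h

lemma detPerp_of_ne {f : U →ₗ[ℝ] V} (h : f ≠ 0) :
    detPerp f = Real.sqrt (LinearMap.det (rmap f)) := by
  rw [detPerp]
  exact if_neg h

set_option maxHeartbeats 1000000 in
lemma detPerp_gram (f : U →ₗ[ℝ] V) :
    detPerp f = Real.sqrt (detPerp (LinearMap.adjoint f ∘ₗ f)) := by
  by_cases h : f = 0
  · have hg : LinearMap.adjoint f ∘ₗ f = 0 := (gram_eq_zero_iff f).mpr h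
    rw [detPerp_of_eq h, detPerp_of_eq hg, Real.sqrt_one]
  · have hg : LinearMap.adjoint f ∘ₗ f ≠ 0 := fun hc => h ((gram_eq_zero_iff f).mp hc)
    rw [detPerp_of_ne h, detPerp_of_ne hg]
    rw [det_rmap_gram f]
    rw [Real.sqrt_sq (det_rmap_nonneg f)]

lemma detPerp_adjoint (f : U →ₗ[ℝ] V) : detPerp f = detPerp (LinearMap.adjoint f) := by
  by_cases h : f = 0
  · have h' : LinearMap.adjoint f = 0 := (adjoint_eq_zero_iff f).mpr h
    rw [detPerp_of_eq h, detPerp_of_eq h']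
  · have h' : LinearMap.adjoint f ≠ 0 := fun hc => h ((adjoint_eq_zero_iff f).mp hc)
    rw [detPerp_of_ne h, detPerp_of_ne h', det_rmap_adjoint]

end DetPerpAux


/-- `det⊥(f) = det⊥(f*) = √(det⊥(f* ∘ f)) = √(det⊥(f ∘ f*))` for a linear map `f : U → V`
of finite-dimensional real inner product spaces. -/
theorem detPerp_adjoint_sqrt {U V : Type*}
    [NormedAddCommGroup U] [InnerProductSpace ℝ U] [FiniteDimensional ℝ U]
    [NormedAddCommGroup V] [InnerProductSpace ℝ V] [FiniteDimensional ℝ V]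
    (f : U →ₗ[ℝ] V) :
    detPerp f = detPerp (LinearMap.adjoint f) ∧
    detPerp f = Real.sqrt (detPerp (LinearMap.adjoint f ∘ₗ f)) ∧
    detPerp f = Real.sqrt (detPerp (f ∘ₗ LinearMap.adjoint f)) := by
  refine ⟨DetPerpAux.detPerp_adjoint f, DetPerpAux.detPerp_gram f, ?_⟩
  have h := DetPerpAux.detPerp_gram (LinearMap.adjoint f)
  rw [LinearMap.adjoint_adjoint] at h
  rw [DetPerpAux.detPerp_adjoint f, h]
end

section
/- Let f : V → W be a linear map of finite-dimensional real inner product spaces and let λ ≥ 0. Then the supremum of dim(L) over all linear subspaces L ⊆ V such that ‖f(v)‖ ≤ λ·‖v‖ holds for every v ∈ L equals F(f)(λ), the sum of the dimensions of the eigenspaces of the selfadjoint positive operator f*f : V → V for eigenvalues μ with μ ≤ λ². -/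
open Module Finset RealInnerProductSpace

/-- Spectral density: for a linear map `f : V → W` of finite-dimensional real inner
product spaces and `λ ≥ 0`, the supremum of `dim L` over all subspaces `L ⊆ V` with
`‖f v‖ ≤ λ‖v‖` for all `v ∈ L` equals
`F(f)(λ) = Σ_{μ ≤ λ²} dim E_μ(f*f)`, the sum of the dimensions of the eigenspaces of
`f* ∘ f` for eigenvalues `μ ≤ λ²`. -/

theorem spectralDensity_eq_sup_dim {V W : Type*}
    [NormedAddCommGroup V] [InnerProductSpace ℝ V] [FiniteDimensional ℝ V]
    [NormedAddCommGroup W] [InnerProductSpace ℝ W] [FiniteDimensional ℝ W]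
    (f : V →ₗ[ℝ] W) (lam : ℝ) (hlam : 0 ≤ lam) :
    sSup {d : ℕ | ∃ L : Submodule ℝ V, (∀ v ∈ L, ‖f v‖ ≤ lam * ‖v‖) ∧ d = Module.finrank ℝ L}
      = ∑ᶠ (mu : ℝ) (_ : mu ≤ lam ^ 2),
          Module.finrank ℝ (Module.End.eigenspace (LinearMap.adjoint f ∘ₗ f) mu) := by
  classical
  set T : V →ₗ[ℝ] V := LinearMap.adjoint f ∘ₗ f with hTdef
  have hT : T.IsSymmetric := fun x y => by
    simp only [hTdef, LinearMap.comp_apply, LinearMap.adjoint_inner_left,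
      LinearMap.adjoint_inner_right]
  set n := Module.finrank ℝ V with hn
  let b : OrthonormalBasis (Fin n) ℝ V := hT.eigenvectorBasis rfl
  let α : Fin n → ℝ := hT.eigenvalues rfl
  have hb : ∀ i, T (b i) = α i • (b i) := fun i => hT.apply_eigenvectorBasis rfl i
  -- basic computations
  have key1 : ∀ v : V, ⟪T v, v⟫ = ∑ i, α i * (⟪b i, v⟫)^2 := by
    intro v
    rw [← b.sum_inner_mul_inner (T v) v]
    refine Finset.sum_congr rfl fun i _ => ?_
    rw [hT v (b i), hb i, real_inner_smul_right, real_inner_comm v (b i)]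
    ring
  have key2 : ∀ v : V, ‖v‖^2 = ∑ i, (⟪b i, v⟫)^2 := by
    intro v
    rw [← real_inner_self_eq_norm_sq, ← b.sum_inner_mul_inner v v]
    refine Finset.sum_congr rfl fun i _ => ?_
    rw [real_inner_comm v (b i)]; ring
  have key3 : ∀ v : V, ‖f v‖^2 = ⟪T v, v⟫ := by
    intro v
    simp only [hTdef, LinearMap.comp_apply, LinearMap.adjoint_inner_left,
      real_inner_self_eq_norm_sq]
  have cond_iff : ∀ v : V, (‖f v‖ ≤ lam * ‖v‖) ↔ ⟪T v, v⟫ ≤ lam^2 * ‖v‖^2 := by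
    intro v
    rw [← key3, ← mul_pow,
      pow_le_pow_iff_left₀ (norm_nonneg _) (mul_nonneg hlam (norm_nonneg _)) two_ne_zero]
  -- spans of subsets of the basis
  have span_card : ∀ s : Finset (Fin n),
      Module.finrank ℝ (Submodule.span ℝ (b '' ↑s)) = s.card := by
    intro s
    have hli : LinearIndependent ℝ (fun i : s => b i) :=
      (b.orthonormal.comp (Subtype.val : s → Fin n) Subtype.val_injective).linearIndependent
    rw [show b '' ↑s = Set.range (fun i : s => b i) from (Set.image_eq_range _ _),
      finrank_span_eq_card hli, Fintype.card_coe]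
  have span_orth : ∀ (s : Finset (Fin n)) (j : Fin n), j ∉ s →
      ∀ v ∈ Submodule.span ℝ (b '' ↑s), ⟪b j, v⟫ = 0 := by
    intro s j hj v hv
    induction hv using Submodule.span_induction with
    | mem x hx =>
      obtain ⟨i, hi, rfl⟩ := hx
      exact b.orthonormal.2 (fun h => hj (h ▸ hi))
    | zero => simp
    | add x y hx hy ihx ihy => rw [inner_add_right, ihx, ihy]; ring
    | smul a x hx ih => rw [real_inner_smul_right, ih]; ring
  set S : Finset (Fin n) := univ.filter (fun i => α i ≤ lam^2) with hS
  set L₀ : Submodule ℝ V := Submodule.span ℝ (b '' ↑S) with hL₀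
  -- L₀ satisfies the condition
  have hL₀cond : ∀ v ∈ L₀, ‖f v‖ ≤ lam * ‖v‖ := by
    intro v hv
    rw [cond_iff, key1, key2, Finset.mul_sum]
    refine Finset.sum_le_sum fun i _ => ?_
    by_cases hi : i ∈ S
    · exact mul_le_mul_of_nonneg_right (by simpa [hS] using hi) (sq_nonneg _)
    · rw [span_orth S i hi v hv]; simp
  -- upper bound
  have hub : ∀ L : Submodule ℝ V, (∀ v ∈ L, ‖f v‖ ≤ lam * ‖v‖) →
      Module.finrank ℝ L ≤ S.card := by
    intro L hL
    have hdisj : L ⊓ L₀ᗮ = ⊥ := by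
      rw [Submodule.eq_bot_iff]
      intro v hv
      obtain ⟨hvL, hvO⟩ := Submodule.mem_inf.mp hv
      by_contra hv0
      have hcs : ∀ i ∈ S, ⟪b i, v⟫ = 0 := by
        intro i hi
        exact (Submodule.mem_orthogonal L₀ v).mp hvO (b i)
          (Submodule.subset_span ⟨i, by simpa using hi, rfl⟩)
      have hlt : lam^2 * ‖v‖^2 < ⟪T v, v⟫ := by
        rw [key1, key2, Finset.mul_sum]
        have hex : ∃ i, ⟪b i, v⟫ ≠ 0 := by
          by_contra h
          push_neg at h
          have h2 : ‖v‖^2 = 0 := by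
            rw [key2]
            exact Finset.sum_eq_zero fun i _ => by rw [h i]; ring
          exact hv0 (norm_eq_zero.mp (by nlinarith [norm_nonneg v]))
        obtain ⟨i, hi⟩ := hex
        have hiS : i ∉ S := fun hmem => hi (hcs i hmem)
        refine Finset.sum_lt_sum (fun j _ => ?_) ⟨i, Finset.mem_univ i, ?_⟩
        · by_cases hjS : j ∈ S
          · rw [hcs j hjS]; simp
          · have : lam^2 < α j := by simpa [hS] using hjS
            exact mul_le_mul_of_nonneg_right this.le (sq_nonneg _)
        · have h1 : lam^2 < α i := by simpa [hS] using hiS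
          have h2 : 0 < (⟪b i, v⟫)^2 := by positivity
          exact mul_lt_mul_of_pos_right h1 h2
      exact absurd ((cond_iff v).mp (hL v hvL)) (not_le.mpr hlt)
    have h1 := Submodule.finrank_sup_add_finrank_inf_eq L L₀ᗮ
    rw [hdisj] at h1
    have h2 : Module.finrank ℝ L₀ + Module.finrank ℝ L₀ᗮ = n :=
      Submodule.finrank_add_finrank_orthogonal L₀
    have h3 : Module.finrank ℝ ↥(L ⊔ L₀ᗮ) ≤ n := Submodule.finrank_le _
    have h4 := span_card S
    rw [← hL₀] at h4
    have h5 : Module.finrank ℝ (⊥ : Submodule ℝ V) = 0 := finrank_bot ℝ V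
    omega
  -- eigenspace description
  have heig : ∀ μ : ℝ, Module.End.eigenspace T μ
      = Submodule.span ℝ (b '' ↑(univ.filter (fun i => α i = μ))) := by
    intro μ
    apply le_antisymm
    · intro v hv
      have hveq : T v = μ • v := Module.End.mem_eigenspace_iff.mp hv
      have hcoef : ∀ j, α j ≠ μ → ⟪b j, v⟫ = 0 := by
        intro j hj
        have h1 : ⟪b j, T v⟫ = μ * ⟪b j, v⟫ := by rw [hveq, real_inner_smul_right]
        have h2 : ⟪b j, T v⟫ = α j * ⟪b j, v⟫ := by
          rw [← hT (b j) v, hb j, real_inner_smul_left]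
        rcases mul_eq_zero.mp (show (α j - μ) * ⟪b j, v⟫ = 0 by
          rw [sub_mul, ← h2, h1]; ring) with h | h
        · exact absurd (sub_eq_zero.mp h) hj
        · exact h
      have hsum : ∑ j ∈ univ.filter (fun i => α i = μ), ⟪b j, v⟫ • b j = v := by
        rw [Finset.sum_filter_of_ne]
        · exact b.sum_repr' v
        · intro j _ hjne
          by_contra h
          exact hjne (by rw [hcoef j h, zero_smul])
      rw [← hsum]
      exact Submodule.sum_mem _ fun j hj => Submodule.smul_mem _ _
        (Submodule.subset_span ⟨j, by simpa using hj, rfl⟩)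
    · rw [Submodule.span_le]
      rintro x ⟨i, hi, rfl⟩
      have hα : α i = μ := by simpa using hi
      exact Module.End.mem_eigenspace_iff.mpr (by rw [hb i, hα])
  -- the finsum equals S.card
  have hfin : (∑ᶠ (mu : ℝ) (_ : mu ≤ lam ^ 2),
      Module.finrank ℝ (Module.End.eigenspace T mu)) = S.card := by
    have hval : ∀ μ : ℝ, (∑ᶠ (_ : μ ≤ lam ^ 2), Module.finrank ℝ (Module.End.eigenspace T μ))
        = if μ ≤ lam^2 then (univ.filter (fun i => α i = μ)).card else 0 := by
      intro μ
      rw [finsum_eq_if]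
      split
      · rw [heig μ, span_card]
      · rfl
    have hsupp : (Function.support fun μ : ℝ =>
        ∑ᶠ (_ : μ ≤ lam ^ 2), Module.finrank ℝ (Module.End.eigenspace T μ))
        ⊆ ↑(univ.image α) := by
      intro μ hμ
      simp only [Function.mem_support, hval] at hμ
      by_contra hμ'
      apply hμ
      have hempty : (univ.filter (fun i => α i = μ)) = ∅ := by
        rw [Finset.filter_eq_empty_iff]
        intro i _
        exact fun h => hμ' (by simp only [Finset.coe_image]; exact ⟨i, by simp [h]⟩)
      rw [hempty]
      simp
    rw [finsum_eq_sum_of_support_subset _ hsupp]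
    rw [Finset.sum_congr rfl fun μ _ => hval μ, ← Finset.sum_filter]
    rw [Finset.card_eq_sum_card_fiberwise (f := α)
      (t := (univ.image α).filter (fun μ => μ ≤ lam^2))
      (fun i hi => by
        simp only [Finset.mem_coe, Finset.mem_filter, Finset.mem_image]
        exact ⟨⟨i, Finset.mem_univ i, rfl⟩, by simpa [hS] using hi⟩)]
    refine Finset.sum_congr rfl fun μ hμ => ?_
    congr 1
    ext i
    simp only [Finset.mem_filter, Finset.mem_univ, true_and, hS]
    have hμ2 : μ ≤ lam ^ 2 := (Finset.mem_filter.mp hμ).2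
    constructor
    · intro h
      exact ⟨by rw [h]; exact hμ2, h⟩
    · rintro ⟨-, h⟩
      exact h
  -- conclude
  rw [hfin]
  have hmem : S.card ∈ {d : ℕ | ∃ L : Submodule ℝ V,
      (∀ v ∈ L, ‖f v‖ ≤ lam * ‖v‖) ∧ d = Module.finrank ℝ L} := by
    refine ⟨L₀, hL₀cond, ?_⟩
    rw [hL₀, span_card S]
  have hbdd : ∀ d ∈ {d : ℕ | ∃ L : Submodule ℝ V,
      (∀ v ∈ L, ‖f v‖ ≤ lam * ‖v‖) ∧ d = Module.finrank ℝ L}, d ≤ S.card := by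
    rintro d ⟨L, hL, rfl⟩
    exact hub L hL
  exact le_antisymm (csSup_le ⟨S.card, hmem⟩ hbdd) (le_csSup ⟨S.card, hbdd⟩ hmem)
end

section
/- Let f : V → W be a nonzero linear map of finite-dimensional real inner product spaces, and define ζ_f(s) = Σ_{λ ∈ spec(f*f), λ > 0} μ(f*f)(λ) · λ^{-s} for real s, where the (finite) sum runs over the positive eigenvalues λ of f*f with multiplicity μ(f*f)(λ). Then ζ_f is differentiable and its derivative at s = 0 satisfies (d/ds)|_{s=0} ζ_f(s) = -2 · ln(det⊥(f)). -/
open LinearMap Module Module.End Finset RealInnerProductSpace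

section specAux
variable {V : Type*} [NormedAddCommGroup V] [InnerProductSpace ℝ V] [FiniteDimensional ℝ V]
variable {n : ℕ}

lemma eigenspace_eq_span (T : V →ₗ[ℝ] V) (hT : T.IsSymmetric) (hn : Module.finrank ℝ V = n)
    (lam : ℝ) :
    Module.End.eigenspace T lam =
      Submodule.span ℝ (hT.eigenvectorBasis hn '' {i | hT.eigenvalues hn i = lam}) := by
  set b := hT.eigenvectorBasis hn with hbdef
  apply le_antisymm
  · intro x hx
    rw [Module.End.mem_eigenspace_iff] at hx
    have hrep : ∀ i, hT.eigenvalues hn i ≠ lam → b.repr x i = 0 := by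
      intro i hi
      have h1 := hT.eigenvectorBasis_apply_self_apply hn x i
      rw [hx] at h1
      simp only [map_smul, PiLp.smul_apply, smul_eq_mul, RCLike.ofReal_real_eq_id,
        id_eq, ← hbdef] at h1
      have h2 : (hT.eigenvalues hn i - lam) * b.repr x i = 0 := by linarith [h1]
      rcases mul_eq_zero.mp h2 with h | h
      · exact absurd (by linarith) hi
      · exact h
    rw [← b.sum_repr x]
    apply Submodule.sum_mem
    intro i _
    by_cases h : hT.eigenvalues hn i = lam
    · exact Submodule.smul_mem _ _ (Submodule.subset_span ⟨i, h, rfl⟩)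
    · rw [hrep i h, zero_smul]; exact Submodule.zero_mem _
  · rw [Submodule.span_le]
    rintro - ⟨i, hi, rfl⟩
    rw [SetLike.mem_coe, Module.End.mem_eigenspace_iff, hT.apply_eigenvectorBasis, hi]
    simp [RCLike.ofReal_real_eq_id]
    rfl

lemma finrank_eigenspace_eq' (T : V →ₗ[ℝ] V) (hT : T.IsSymmetric)
    (hn : Module.finrank ℝ V = n) (lam : ℝ) :
    Module.finrank ℝ (Module.End.eigenspace T lam) =
      (Finset.univ.filter fun i => hT.eigenvalues hn i = lam).card := by
  classical
  set b := hT.eigenvectorBasis hn with hbdef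
  set s : Finset (Fin n) := Finset.univ.filter (fun i => hT.eigenvalues hn i = lam) with hs
  have hli : LinearIndependent ℝ (fun i : ↥s => b i) :=
    b.orthonormal.linearIndependent.comp _ Subtype.val_injective
  have hr : Set.range (fun i : ↥s => b (i : Fin n)) =
      b '' {i | hT.eigenvalues hn i = lam} := by
    ext y
    constructor
    · rintro ⟨i, rfl⟩
      exact ⟨i, (Finset.mem_filter.mp i.2).2, rfl⟩
    · rintro ⟨i, hi, rfl⟩
      exact ⟨⟨i, Finset.mem_filter.mpr ⟨Finset.mem_univ i, hi⟩⟩, rfl⟩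
  rw [eigenspace_eq_span T hT hn lam, ← hr, finrank_span_eq_card hli, Fintype.card_coe]

end specAux

section mainAux
variable {V W : Type*}
    [NormedAddCommGroup V] [InnerProductSpace ℝ V] [FiniteDimensional ℝ V]
    [NormedAddCommGroup W] [InnerProductSpace ℝ W] [FiniteDimensional ℝ W]
    (f : V →ₗ[ℝ] W)

lemma my_isSymm : (LinearMap.adjoint f ∘ₗ f).IsSymmetric := by
  intro x y
  simp only [LinearMap.comp_apply]
  rw [LinearMap.adjoint_inner_left, LinearMap.adjoint_inner_right]

lemma my_inner (x : V) : ⟪(LinearMap.adjoint f ∘ₗ f) x, x⟫ = ⟪f x, f x⟫ := by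
  simp only [LinearMap.comp_apply]
  rw [LinearMap.adjoint_inner_left]

lemma my_eigen_nonneg (i : Fin (Module.finrank ℝ V)) :
    0 ≤ (my_isSymm f).eigenvalues rfl i := by
  set b := (my_isSymm f).eigenvectorBasis (rfl : Module.finrank ℝ V = _)
  set μ := (my_isSymm f).eigenvalues (rfl : Module.finrank ℝ V = _)
  have h1 : ⟪(LinearMap.adjoint f ∘ₗ f) (b i), b i⟫ = μ i := by
    rw [(my_isSymm f).apply_eigenvectorBasis, RCLike.ofReal_real_eq_id]
    rw [id_eq, real_inner_smul_left, real_inner_self_eq_norm_sq, b.orthonormal.1 i]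
    ring
  rw [← h1, my_inner]
  exact real_inner_self_nonneg

lemma my_exists_pos (hf : f ≠ 0) : ∃ i, 0 < (my_isSymm f).eigenvalues rfl i := by
  by_contra hcon
  push_neg at hcon
  have hz : ∀ i, (my_isSymm f).eigenvalues rfl i = 0 := fun i =>
    le_antisymm (hcon i) (my_eigen_nonneg f i)
  have hg0 : (LinearMap.adjoint f ∘ₗ f) = 0 := by
    apply ((my_isSymm f).eigenvectorBasis (rfl : Module.finrank ℝ V = _)).toBasis.ext
    intro i
    rw [OrthonormalBasis.coe_toBasis, (my_isSymm f).apply_eigenvectorBasis, hz i]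
    simp
  apply hf
  ext x
  have h2 : ⟪f x, f x⟫ = 0 := by rw [← my_inner, hg0]; simp
  simpa using inner_self_eq_zero.mp h2

lemma my_det (hf : f ≠ 0) :
    LinearMap.det ((Submodule.orthogonalProjectionOnto (LinearMap.ker (LinearMap.adjoint f ∘ₗ f))ᗮ).toLinearMap
      ∘ₗ (LinearMap.adjoint f ∘ₗ f)
      ∘ₗ (LinearMap.ker (LinearMap.adjoint f ∘ₗ f))ᗮ.subtype)
    = ∏ i ∈ Finset.univ.filter (fun i => 0 < (my_isSymm f).eigenvalues rfl i),
        (my_isSymm f).eigenvalues rfl i := by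
  classical
  set g : V →ₗ[ℝ] V := LinearMap.adjoint f ∘ₗ f with hgdef
  have hT : g.IsSymmetric := my_isSymm f
  set n := Module.finrank ℝ V with hndef
  set b := (my_isSymm f).eigenvectorBasis (rfl : Module.finrank ℝ V = n) with hbdef
  set μ := (my_isSymm f).eigenvalues (rfl : Module.finrank ℝ V = n) with hmudef
  set P : Finset (Fin n) := Finset.univ.filter (fun i => 0 < μ i) with hPdef
  set K : Submodule ℝ V := (LinearMap.ker g)ᗮ with hKdef
  have happly : ∀ i, g (b i) = μ i • b i := by
    intro i
    rw [hbdef, (my_isSymm f).apply_eigenvectorBasis, RCLike.ofReal_real_eq_id]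
    rfl
  have hmemK : ∀ i, 0 < μ i → b i ∈ K := by
    intro i hi
    rw [hKdef, Submodule.mem_orthogonal]
    intro x hx
    have hgx : g x = 0 := hx
    have h1 : μ i * ⟪x, b i⟫ = 0 := by
      rw [← real_inner_smul_right, ← happly i, ← hT x (b i), hgx, inner_zero_left]
    rcases mul_eq_zero.mp h1 with h | h
    · exact absurd h (ne_of_gt hi)
    · exact h
  have hrankK : Module.finrank ℝ K = P.card := by
    have h1 : Module.finrank ℝ (LinearMap.ker g) + Module.finrank ℝ K =
        Module.finrank ℝ V := Submodule.finrank_add_finrank_orthogonal _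
    have h2 : Module.finrank ℝ (LinearMap.ker g) =
        (Finset.univ.filter fun i => μ i = 0).card := by
      rw [← Module.End.eigenspace_zero g]
      exact finrank_eigenspace_eq' g hT rfl 0
    have h3 : (Finset.univ.filter fun i => μ i = 0).card + P.card = n := by
      rw [hPdef]
      have : (Finset.univ.filter fun i => 0 < μ i)
          = (Finset.univ.filter fun i => ¬ μ i = 0) := by
        apply Finset.filter_congr
        intro i _
        constructor
        · exact fun h => ne_of_gt h
        · exact fun h => (my_eigen_nonneg f i).lt_of_ne (Ne.symm h)
      rw [this, Finset.card_filter_add_card_filter_not, Finset.card_univ,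
        Fintype.card_fin]
    omega
  have hne : Nonempty ↥P := by
    obtain ⟨i, hi⟩ := my_exists_pos f hf
    exact ⟨⟨i, Finset.mem_filter.mpr ⟨Finset.mem_univ i, hi⟩⟩⟩
  set v : ↥P → K := fun i => ⟨b i, hmemK i (Finset.mem_filter.mp i.2).2⟩ with hvdef
  have hvon : Orthonormal ℝ v := by
    rw [orthonormal_iff_ite]
    intro i j
    have hb := b.orthonormal
    rw [orthonormal_iff_ite] at hb
    have : (⟪v i, v j⟫ : ℝ) = ⟪b i, b j⟫ := rfl
    rw [this, hb i j]
    simp only [Subtype.ext_iff]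
  have hcard : Fintype.card ↥P = Module.finrank ℝ K := by
    rw [Fintype.card_coe, hrankK]
  set B := basisOfLinearIndependentOfCardEqFinrank hvon.linearIndependent hcard with hBdef
  have hBco : ⇑B = v := coe_basisOfLinearIndependentOfCardEqFinrank _ _
  set Tr : K →ₗ[ℝ] K := (Submodule.orthogonalProjectionOnto K).toLinearMap ∘ₗ g ∘ₗ K.subtype with hTrdef
  have hTrapp : ∀ j : ↥P, Tr (v j) = (μ j : ℝ) • v j := by
    intro j
    have h1 : Tr (v j) = Submodule.orthogonalProjectionOnto K (g (b j)) := rfl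
    rw [h1, happly, map_smul]
    congr 1
    exact Submodule.orthogonalProjectionOnto_mem_subspace_eq_self (v j)
  have hmat : LinearMap.toMatrix B B Tr = Matrix.diagonal (fun j : ↥P => μ j) := by
    ext i j
    rw [LinearMap.toMatrix_apply, hBco, hTrapp, map_smul, ← hBco, B.repr_self]
    by_cases h : i = j
    · simp [h]
    · simp [Matrix.diagonal_apply_ne _ h, Finsupp.single_apply, Ne.symm h]
  have hdet : LinearMap.det Tr = ∏ i ∈ P, μ i := by
    rw [← LinearMap.det_toMatrix B, hmat, Matrix.det_diagonal]
    exact Finset.prod_coe_sort P μ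
  exact hdet

end mainAux

/-- For a nonzero linear map `f : V → W` of finite-dimensional real inner product spaces,
the zeta function `ζ_f(s) = Σ_{λ ∈ spec(f*f), λ > 0} μ(f*f)(λ) · λ^{-s}` is differentiable
and `(d/ds)|_{s=0} ζ_f(s) = -2 · ln(det⊥(f))`. -/
theorem zeta_deriv_at_zero {V W : Type*}
    [NormedAddCommGroup V] [InnerProductSpace ℝ V] [FiniteDimensional ℝ V]
    [NormedAddCommGroup W] [InnerProductSpace ℝ W] [FiniteDimensional ℝ W]
    (f : V →ₗ[ℝ] W) (hf : f ≠ 0)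
    (zeta : ℝ → ℝ)
    (hzeta : ∀ s : ℝ, zeta s = ∑ᶠ (lam : ℝ) (_ : 0 < lam),
      (Module.finrank ℝ (Module.End.eigenspace (LinearMap.adjoint f ∘ₗ f) lam) : ℝ)
        * lam ^ (-s)) :
    Differentiable ℝ zeta ∧ deriv zeta 0 = -2 * Real.log (detPerp f) := by
  classical
  set μ := (my_isSymm f).eigenvalues (rfl : Module.finrank ℝ V = _) with hmu
  set P : Finset (Fin (Module.finrank ℝ V)) := Finset.univ.filter (fun i => 0 < μ i) with hP
  have hposP : ∀ i ∈ P, 0 < μ i := fun i hi => (Finset.mem_filter.mp hi).2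
  have hcount : ∀ lam : ℝ,
      Module.finrank ℝ (Module.End.eigenspace (LinearMap.adjoint f ∘ₗ f) lam) =
        (Finset.univ.filter fun i => μ i = lam).card :=
    fun lam => finrank_eigenspace_eq' (LinearMap.adjoint f ∘ₗ f) (my_isSymm f) rfl lam
  -- Step 1: closed form for zeta
  have hzeta' : ∀ s : ℝ, zeta s = ∑ i ∈ P, μ i ^ (-s) := by
    intro s
    rw [hzeta s]
    have h1 : (∑ᶠ (lam : ℝ) (_ : 0 < lam),
        ((Module.finrank ℝ (Module.End.eigenspace (LinearMap.adjoint f ∘ₗ f) lam) : ℝ)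
          * lam ^ (-s)))
        = ∑ᶠ (lam : ℝ), if 0 < lam then
            ((Module.finrank ℝ (Module.End.eigenspace (LinearMap.adjoint f ∘ₗ f) lam) : ℝ)
              * lam ^ (-s)) else 0 :=
      finsum_congr fun lam => finsum_eq_if
    rw [h1, finsum_eq_finset_sum_of_support_subset _ (s := P.image μ) ?hsupp]
    case hsupp =>
      intro lam hlam
      simp only [Function.mem_support] at hlam
      by_cases h : 0 < lam
      · rw [if_pos h] at hlam
        have hc : (Finset.univ.filter fun i => μ i = lam).card ≠ 0 := by
          intro hc0
          rw [hcount lam, hc0] at hlam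
          simp at hlam
        obtain ⟨i, hi⟩ := Finset.card_pos.mp (Nat.pos_of_ne_zero hc)
        have hμi : μ i = lam := (Finset.mem_filter.mp hi).2
        exact Finset.mem_coe.mpr (Finset.mem_image.mpr
          ⟨i, Finset.mem_filter.mpr ⟨Finset.mem_univ i, hμi ▸ h⟩, hμi⟩)
      · rw [if_neg h] at hlam
        exact absurd rfl hlam
    have h2 : ∑ lam ∈ P.image μ, (if 0 < lam then
        ((Module.finrank ℝ (Module.End.eigenspace (LinearMap.adjoint f ∘ₗ f) lam) : ℝ)
          * lam ^ (-s)) else 0)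
        = ∑ lam ∈ P.image μ,
            ((P.filter fun i => μ i = lam).card • (fun l : ℝ => l ^ (-s)) lam) := by
      apply Finset.sum_congr rfl
      intro lam hlam
      obtain ⟨i, hiP, rfl⟩ := Finset.mem_image.mp hlam
      rw [if_pos (hposP i hiP), hcount, nsmul_eq_mul]
      have hfe : (Finset.univ.filter fun j => μ j = μ i) = P.filter fun j => μ j = μ i := by
        ext j
        simp only [Finset.mem_filter, Finset.mem_univ, true_and, hP]
        exact ⟨fun h => ⟨h ▸ hposP i hiP, h⟩, fun h => h.2⟩
      rw [hfe]
    rw [h2, ← Finset.sum_comp (fun l : ℝ => l ^ (-s)) μ]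
  -- Step 2: derivative
  have hD : ∀ s₀ : ℝ, HasDerivAt zeta
      (∑ i ∈ P, -(Real.log (μ i) * μ i ^ (-s₀))) s₀ := by
    intro s₀
    rw [funext hzeta']
    apply HasDerivAt.fun_sum
    intro i hi
    have h1 := (Real.hasStrictDerivAt_const_rpow (hposP i hi) (-s₀)).hasDerivAt
    have h2 := h1.comp s₀ (hasDerivAt_neg s₀)
    refine h2.congr_deriv ?_
    ring
  have hdiff : Differentiable ℝ zeta := fun s₀ => (hD s₀).differentiableAt
  refine ⟨hdiff, ?_⟩
  have hderiv0 : deriv zeta 0 = -∑ i ∈ P, Real.log (μ i) := by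
    rw [(hD 0).deriv, ← Finset.sum_neg_distrib]
    apply Finset.sum_congr rfl
    intro i hi
    rw [neg_zero, Real.rpow_zero, mul_one]
  -- Step 3: detPerp
  have hprod : 0 < ∏ i ∈ P, μ i := Finset.prod_pos hposP
  have hdetPerp : detPerp f = Real.sqrt (∏ i ∈ P, μ i) := by
    rw [detPerp, if_neg hf, my_det f hf]
  rw [hderiv0, hdetPerp, Real.log_sqrt (le_of_lt hprod),
    Real.log_prod (fun i hi => ne_of_gt (hposP i hi))]
  ring
end

section
/- Let Δ : V → V be a positive selfadjoint endomorphism of a finite-dimensional real inner product space V. Then the trace of the heat operator e^{-tΔ} (the operator exponential of -t·Δ) converges as t → ∞ to the dimension of ker(Δ): lim_{t→∞} tr(e^{-tΔ}) = dim(ker Δ). -/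
open RealInnerProductSpace in
/-- Let `Δ : V → V` be a positive selfadjoint endomorphism of a finite-dimensional real
inner product space.  Then the trace of the heat operator `e^{-tΔ}` converges, as
`t → ∞`, to the dimension of `ker Δ`. -/
theorem trace_heat_operator_tendsto {V : Type*}
    [NormedAddCommGroup V] [InnerProductSpace ℝ V] [FiniteDimensional ℝ V]
    (Δ : V →ₗ[ℝ] V)
    (hsa : ∀ x y : V, ⟪Δ x, y⟫ = ⟪x, Δ y⟫)
    (hpos : ∀ v : V, 0 ≤ ⟪Δ v, v⟫) :
    Filter.Tendsto
      (fun t : ℝ => LinearMap.trace ℝ V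
        ((NormedSpace.exp ((-t) • (LinearMap.toContinuousLinearMap Δ)) : V →L[ℝ] V)
          : V →ₗ[ℝ] V))
      Filter.atTop
      (nhds ((Module.finrank ℝ ↥(LinearMap.ker Δ) : ℝ))) := by
  classical
  set n := Module.finrank ℝ V with hn
  have hT : LinearMap.IsSymmetric Δ := hsa
  set b := hT.eigenvectorBasis rfl with hb
  set μ : Fin n → ℝ := hT.eigenvalues rfl with hμ
  have happly : ∀ i, Δ (b i) = μ i • b i := fun i => hT.apply_eigenvectorBasis rfl i
  have hμnonneg : ∀ i, 0 ≤ μ i := by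
    intro i
    have := hpos (b i)
    rwa [happly i, real_inner_smul_left, real_inner_self_eq_norm_sq, b.orthonormal.1 i,
      one_pow, mul_one] at this
  -- exp applied to eigenvector
  have hexp : ∀ (t : ℝ) (i : Fin n),
      (NormedSpace.exp ((-t) • (LinearMap.toContinuousLinearMap Δ))) (b i)
        = Real.exp (-t * μ i) • b i := by
    intro t i
    set A : V →L[ℝ] V := (-t) • LinearMap.toContinuousLinearMap Δ with hA
    have hpow : ∀ m : ℕ, (A ^ m) (b i) = (-t * μ i) ^ m • b i := by
      intro m
      induction m with
      | zero => simp
      | succ m ih =>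
        have hAb : A (b i) = (-t * μ i) • b i := by
          rw [hA, ContinuousLinearMap.smul_apply, LinearMap.coe_toContinuousLinearMap',
            happly i, smul_smul]
        rw [pow_succ, ContinuousLinearMap.mul_apply, hAb, map_smul, ih, smul_smul,
          pow_succ]
        ring_nf
    have hsum : Summable fun m : ℕ => ((m.factorial : ℝ)⁻¹) • A ^ m :=
      NormedSpace.expSeries_summable' (𝕂 := ℝ) A
    rw [NormedSpace.exp_eq_tsum (𝕂 := ℝ)]
    have := (ContinuousLinearMap.apply ℝ V (b i)).map_tsum hsum
    simp only [ContinuousLinearMap.apply_apply] at this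
    rw [this]
    simp_rw [ContinuousLinearMap.smul_apply, hpow, smul_smul]
    have hs2 : Summable fun m : ℕ => ((m.factorial : ℝ)⁻¹) * (-t * μ i) ^ m := by
      simpa [smul_eq_mul] using NormedSpace.expSeries_summable' (𝕂 := ℝ) (-t * μ i)
    rw [Summable.tsum_smul_const hs2, Real.exp_eq_exp_ℝ, NormedSpace.exp_eq_tsum (𝕂 := ℝ)]
    simp only [smul_eq_mul]
  -- trace formula
  have htrace : ∀ t : ℝ,
      LinearMap.trace ℝ V
        ((NormedSpace.exp ((-t) • (LinearMap.toContinuousLinearMap Δ)) : V →L[ℝ] V)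
          : V →ₗ[ℝ] V) = ∑ i, Real.exp (-t * μ i) := by
    intro t
    rw [LinearMap.trace_eq_matrix_trace ℝ b.toBasis, Matrix.trace]
    congr 1
    funext i
    rw [Matrix.diag_apply, LinearMap.toMatrix_apply]
    have := hexp t i
    rw [neg_smul] at this
    simp [this, b.repr_self, EuclideanSpace.single_apply, neg_mul]
  simp_rw [htrace]
  -- kernel dimension
  have hker : Module.finrank ℝ ↥(LinearMap.ker Δ)
      = (Finset.univ.filter (fun i => μ i = 0)).card := by
    have hspan : LinearMap.ker Δ = Submodule.span ℝ (Set.range (fun i : {i // μ i = 0} => b i)) := by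
      apply le_antisymm
      · intro v hv
        have hv0 : Δ v = 0 := hv
        have hrepr : ∀ i, μ i ≠ 0 → b.repr v i = 0 := by
          intro i hi
          have := hT.eigenvectorBasis_apply_self_apply rfl v i
          rw [hv0] at this
          simp only [map_zero] at this
          have : (0 : ℝ) = μ i * b.repr v i := by simpa using this
          field_simp at this
          exact (mul_eq_zero.mp this.symm).resolve_left hi
        have hv' : v = ∑ i ∈ Finset.univ.filter (fun i => μ i = 0), b.repr v i • b i := by
          conv_lhs => rw [← b.sum_repr v]
          rw [Finset.sum_filter]
          refine Finset.sum_congr rfl fun i _ => ?_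
          by_cases h : μ i = 0
          · simp [h]
          · simp [h, hrepr i h]
        rw [hv']
        apply Submodule.sum_mem
        intro i hi
        simp only [Finset.mem_filter] at hi
        exact Submodule.smul_mem _ _ (Submodule.subset_span ⟨⟨i, hi.2⟩, rfl⟩)
      · rw [Submodule.span_le]
        rintro x ⟨⟨i, hi⟩, rfl⟩
        simp only [SetLike.mem_coe, LinearMap.mem_ker]
        rw [happly i, hi, zero_smul]
    rw [hspan, finrank_span_eq_card, Fintype.card_subtype]
    exact (b.orthonormal.linearIndependent.comp _ Subtype.coe_injective)
  rw [hker]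
  have hsumlim : (((Finset.univ.filter (fun i => μ i = 0)).card : ℝ))
      = ∑ i, (if μ i = 0 then (1:ℝ) else 0) := by
    rw [Finset.sum_boole]
  rw [hsumlim]
  apply tendsto_finset_sum
  intro i _
  by_cases h : μ i = 0
  · simp only [h, if_true, mul_zero, neg_zero, Real.exp_zero]
    exact tendsto_const_nhds
  · have hpos' : 0 < μ i := lt_of_le_of_ne (hμnonneg i) (Ne.symm h)
    simp only [h, if_false]
    have h1 : Filter.Tendsto (fun t : ℝ => -t * μ i) Filter.atTop Filter.atBot := by
      have h2 : Filter.Tendsto (fun t : ℝ => t * μ i) Filter.atTop Filter.atTop :=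
        Filter.Tendsto.atTop_mul_const hpos' Filter.tendsto_id
      exact (Filter.tendsto_neg_atTop_atBot.comp h2).congr fun t => (neg_mul t (μ i)).symm
    exact Real.tendsto_exp_atBot.comp h1
end
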